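/- Assume lim_{n→∞} τ(n) = ∞ and p(n) < 1 for all n, let ξ(n) = max_{0≤s≤n} τ(s), and set a = liminf_{n→∞} Σ_{i=τ(n)}^{n−1} p(i). If 0 < a ≤ 1/e and limsup_{n→∞} Σ_{j=ξ(n)}^{n} p(j) Π_{i=τ(j)}^{ξ(n)−1} (1 − p(i))^{−1} > 1 − (1 − a − √(1 − 2a − a²))/2, then every solution of the equation Δx(n) + p(n) x(τ(n)) = 0 oscillates. -/

import Mathlib

/-- `ξ(n) = max_{0 ≤ s ≤ n} τ(s)` (for `n ≥ 0`). -/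
noncomputable def xiMax (τ : ℤ → ℤ) (n : ℤ) : ℤ :=
  Finset.fold max (τ 0) τ (Finset.Icc 0 n)


open Finset

/-- summation step for integer Ico intervals -/
lemma sumIcoSucc (f : ℤ → ℝ) {a b : ℤ} (h : a ≤ b) :
    ∑ k ∈ Ico a (b+1), f k = (∑ k ∈ Ico a b, f k) + f b := by
  have : Ico a (b+1) = insert b (Ico a b) := by ext k; simp; omega
  rw [this, Finset.sum_insert Finset.right_notMem_Ico, add_comm]

lemma prodIcoSucc (f : ℤ → ℝ) {a b : ℤ} (h : a ≤ b) :
    ∏ k ∈ Ico a (b+1), f k = (∏ k ∈ Ico a b, f k) * f b := by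
  have : Ico a (b+1) = insert b (Ico a b) := by ext k; simp; omega
  rw [this, Finset.prod_insert Finset.right_notMem_Ico, mul_comm]

lemma sumIcoSplit (f : ℤ → ℝ) {a b c : ℤ} (h1 : a ≤ b) (h2 : b ≤ c) :
    (∑ k ∈ Ico a b, f k) + (∑ k ∈ Ico b c, f k) = ∑ k ∈ Ico a c, f k := by
  rw [← Finset.sum_union (Finset.Ico_disjoint_Ico_consecutive a b c),
    Finset.Ico_union_Ico_eq_Ico h1 h2]

/-- spec for fold max -/
lemma foldMaxSpec (f : ℤ → ℤ) (b : ℤ) (s : Finset ℤ) :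
    (b ≤ s.fold max b f) ∧ (∀ u ∈ s, f u ≤ s.fold max b f) ∧
      (s.fold max b f = b ∨ ∃ u ∈ s, s.fold max b f = f u) := by
  classical
  induction s using Finset.induction_on with
  | empty => simp
  | @insert a s ha ih =>
    rw [Finset.fold_insert ha]
    refine ⟨le_trans ih.1 (le_max_right _ _), ?_, ?_⟩
    · intro u hu
      rcases Finset.mem_insert.1 hu with h | h
      · subst h; exact le_max_left _ _
      · exact le_trans (ih.2.1 u h) (le_max_right _ _)
    · rcases max_cases (f a) (s.fold max b f) with ⟨he, _⟩ | ⟨he, _⟩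
      · exact Or.inr ⟨a, Finset.mem_insert_self a s, he⟩
      · rw [he]
        rcases ih.2.2 with h | ⟨u, hu, he'⟩
        · exact Or.inl h
        · exact Or.inr ⟨u, Finset.mem_insert_of_mem hu, he'⟩

lemma xiMax_def' (τ : ℤ → ℤ) (n : ℤ) : xiMax τ n = Finset.fold max (τ 0) τ (Finset.Icc 0 n) := rfl
lemma xiMax_ge (τ : ℤ → ℤ) {s n : ℤ} (h0 : 0 ≤ s) (hsn : s ≤ n) : τ s ≤ xiMax τ n :=
  (foldMaxSpec τ (τ 0) (Finset.Icc 0 n)).2.1 s (by simp [Finset.mem_Icc]; omega)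

lemma xiMax_attained (τ : ℤ → ℤ) {n : ℤ} (hn : 0 ≤ n) :
    ∃ s, 0 ≤ s ∧ s ≤ n ∧ xiMax τ n = τ s := by
  rcases (foldMaxSpec τ (τ 0) (Finset.Icc 0 n)).2.2 with h | ⟨u, hu, he⟩
  · exact ⟨0, le_refl 0, hn, h⟩
  · rw [Finset.mem_Icc] at hu; exact ⟨u, hu.1, hu.2, he⟩

lemma xiMax_le (τ : ℤ → ℤ) (hτ : ∀ n : ℤ, 0 ≤ n → τ n ≤ n - 1) {n : ℤ} (hn : 0 ≤ n) :
    xiMax τ n ≤ n - 1 := by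
  rcases xiMax_attained τ hn with ⟨s, hs0, hsn, he⟩
  have := hτ s hs0
  omega

lemma xiMax_mono (τ : ℤ → ℤ) {u v : ℤ} (h0 : 0 ≤ u) (huv : u ≤ v) :
    xiMax τ u ≤ xiMax τ v := by
  rcases xiMax_attained τ h0 with ⟨s, hs0, hsu, he⟩
  rw [he]
  exact xiMax_ge τ hs0 (le_trans hsu huv)

/-- telescoping the difference equation -/
lemma telescopeX (p : ℤ → ℝ) (τ : ℤ → ℤ) (x : ℤ → ℝ)
    (hx : ∀ k : ℤ, 0 ≤ k → x (k+1) = x k - p k * x (τ k))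
    {u v : ℤ} (hu : 0 ≤ u) (huv : u ≤ v) :
    x u = x v + ∑ k ∈ Finset.Ico u v, p k * x (τ k) := by
  refine Int.le_induction (motive := fun v _ => x u = x v + ∑ k ∈ Finset.Ico u v, p k * x (τ k))
    ?_ ?_ v huv
  · simp
  · intro v hv ih
    rw [sumIcoSucc _ hv, hx v (le_trans hu hv), ih]; ring

/-- decay estimate: `x z ≤ x w * ∏ (1 - p i)` -/
lemma decayX (p : ℤ → ℝ) (τ : ℤ → ℤ) (x : ℤ → ℝ)
    (hx : ∀ k : ℤ, 0 ≤ k → x (k+1) = x k - p k * x (τ k))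
    (hp : ∀ n : ℤ, 0 ≤ n → 0 ≤ p n) (hp1 : ∀ n : ℤ, 0 ≤ n → p n < 1)
    (hτub : ∀ n : ℤ, 0 ≤ n → τ n ≤ n - 1)
    (M1 M2 : ℤ) (hM1 : 0 ≤ M1) (hM12 : M1 ≤ M2)
    (hmono : ∀ u v : ℤ, M1 ≤ u → u ≤ v → x v ≤ x u)
    (hτ2 : ∀ i : ℤ, M2 ≤ i → M1 ≤ τ i)
    {w z : ℤ} (hw : M2 ≤ w) (hwz : w ≤ z) :
    x z ≤ x w * ∏ i ∈ Finset.Ico w z, (1 - p i) := by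
  refine Int.le_induction (motive := fun z _ => x z ≤ x w * ∏ i ∈ Finset.Ico w z, (1 - p i))
    ?_ ?_ z hwz
  · simp
  · intro z hz ih
    have hz0 : (0:ℤ) ≤ z := by omega
    have hstep : x (z+1) ≤ x z * (1 - p z) := by
      have h1 : x (τ z) ≥ x z := by
        apply hmono (τ z) z (hτ2 z (by omega)) (by have := hτub z hz0; omega)
      have h2 : 0 ≤ p z := hp z hz0
      rw [hx z hz0]; nlinarith
    have hpz : (0:ℝ) < 1 - p z := by have := hp1 z hz0; linarith
    calc x (z+1) ≤ x z * (1 - p z) := hstep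
      _ ≤ (x w * ∏ i ∈ Finset.Ico w z, (1 - p i)) * (1 - p z) := by
          apply mul_le_mul_of_nonneg_right ih (le_of_lt hpz)
      _ = x w * ∏ i ∈ Finset.Ico w (z+1), (1 - p i) := by
          rw [prodIcoSucc _ hz]; ring

/-- Riemann-sum style lower bound -/
lemma riemannX (p : ℤ → ℝ) (A : ℝ) (hA : 0 ≤ A) {u v : ℤ}
    (hp : ∀ i : ℤ, u ≤ i → 0 ≤ p i) (huv : u ≤ v) :
    A^2/2 - (max 0 (A - ∑ i ∈ Finset.Ico u v, p i))^2/2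
      ≤ ∑ k ∈ Finset.Ico u v, p k * max 0 (A - ∑ i ∈ Finset.Ico u k, p i) := by
  refine Int.le_induction (motive := fun v _ => A^2/2 - (max 0 (A - ∑ i ∈ Finset.Ico u v, p i))^2/2
      ≤ ∑ k ∈ Finset.Ico u v, p k * max 0 (A - ∑ i ∈ Finset.Ico u k, p i)) ?_ ?_ v huv
  · simp [max_eq_right hA]
  · intro v hv ih
    rw [sumIcoSucc _ hv, sumIcoSucc _ hv]
    set F := ∑ i ∈ Finset.Ico u v, p i with hF
    set α := max 0 (A - F) with hα
    set β := max 0 (A - (F + p v)) with hβ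
    have hpv : 0 ≤ p v := hp v (by omega)
    have hα0 : 0 ≤ α := le_max_left _ _
    have hβ0 : 0 ≤ β := le_max_left _ _
    have hβα : β ≤ α := by apply max_le_max (le_refl 0); linarith
    have hαβ : α ≤ β + p v := by
      rcases le_total (A - F) 0 with h | h
      · rw [hα, max_eq_left h]; linarith
      · rw [hα, max_eq_right h]
        rcases le_total (A - (F + p v)) 0 with h2 | h2
        · rw [hβ, max_eq_left h2]; linarith
        · rw [hβ, max_eq_right h2]; linarith
    have key : α^2/2 - β^2/2 ≤ p v * α := by nlinarith
    linarith

set_option maxHeartbeats 1000000 in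
lemma main_pos (p : ℤ → ℝ) (τ : ℤ → ℤ)
    (hp : ∀ n : ℤ, 0 ≤ n → 0 ≤ p n)
    (hp1 : ∀ n : ℤ, 0 ≤ n → p n < 1)
    (hτ : ∀ n : ℤ, 0 ≤ n → τ n ≤ n - 1)
    (hτlim : Filter.Tendsto τ Filter.atTop Filter.atTop)
    (a : ℝ)
    (ha : a = Filter.liminf (fun n : ℤ => ∑ i ∈ Finset.Ico (τ n) n, p i) Filter.atTop)
    (ha0 : 0 < a) (ha1 : a ≤ 1 / Real.exp 1)
    (hcond : 1 - (1 - a - Real.sqrt (1 - 2 * a - a ^ 2)) / 2 <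
      Filter.limsup (fun n : ℤ =>
        ∑ j ∈ Finset.Icc (xiMax τ n) n, p j * ∏ i ∈ Finset.Ico (τ j) (xiMax τ n), (1 - p i)⁻¹)
      Filter.atTop)
    (x : ℤ → ℝ)
    (hxeq : ∀ n : ℤ, 0 ≤ n → x (n + 1) - x n + p n * x (τ n) = 0)
    (N : ℤ) (hN : ∀ n ≥ N, 0 < x n) : False := by
  classical
  set σ : ℤ → ℤ := xiMax τ with hσdef
  have xstep : ∀ k : ℤ, 0 ≤ k → x (k+1) = x k - p k * x (τ k) := by
    intro k hk; have := hxeq k hk; linarith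
  -- thresholds for τ
  have tthr : ∀ C : ℤ, ∃ K : ℤ, ∀ i : ℤ, K ≤ i → C ≤ τ i := by
    intro C
    rcases Filter.eventually_atTop.mp (hτlim.eventually_ge_atTop C) with ⟨K, hK⟩
    exact ⟨K, hK⟩
  -- the ladder of constants
  set M0 : ℤ := max N 0 with hM0def
  have hM00 : (0:ℤ) ≤ M0 := le_max_right _ _
  have hxpos : ∀ n : ℤ, M0 ≤ n → 0 < x n := fun n hn => hN n (le_trans (le_max_left _ _) hn)
  obtain ⟨K1, hK1⟩ := tthr M0
  set M1 : ℤ := max K1 (M0+1) with hM1def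
  have hM01 : M0 + 1 ≤ M1 := le_max_right _ _
  have hM1τ : ∀ i : ℤ, M1 ≤ i → M0 ≤ τ i := fun i hi => hK1 i (le_trans (le_max_left _ _) hi)
  have hM10 : (0:ℤ) ≤ M1 := by omega
  have xdec : ∀ k : ℤ, M1 ≤ k → x (k+1) ≤ x k := by
    intro k hk
    rw [xstep k (by omega)]
    have h1 := hp k (by omega)
    have h2 := hxpos (τ k) (hM1τ k hk)
    nlinarith
  have xmono : ∀ u v : ℤ, M1 ≤ u → u ≤ v → x v ≤ x u := by
    intro u v hu huv
    refine Int.le_induction (motive := fun v _ => x v ≤ x u) ?_ ?_ v huv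
    · exact le_refl _
    · intro v hv ih; exact le_trans (xdec v (by omega)) ih
  obtain ⟨K2, hK2⟩ := tthr M1
  set M2 : ℤ := max K2 (M1+1) with hM2def
  have hM12 : M1 + 1 ≤ M2 := le_max_right _ _
  have hM2τ : ∀ i : ℤ, M2 ≤ i → M1 ≤ τ i := fun i hi => hK2 i (le_trans (le_max_left _ _) hi)
  obtain ⟨K3, hK3⟩ := tthr M2
  set M3 : ℤ := max K3 (M2+1) with hM3def
  have hM23 : M2 + 1 ≤ M3 := le_max_right _ _
  have hM3τ : ∀ i : ℤ, M3 ≤ i → M2 ≤ τ i := fun i hi => hK3 i (le_trans (le_max_left _ _) hi)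
  -- σ facts
  have hσ1 : ∀ n : ℤ, 0 ≤ n → τ n ≤ σ n := fun n hn => xiMax_ge τ hn (le_refl n)
  have hσub : ∀ n : ℤ, 0 ≤ n → σ n ≤ n - 1 := fun n hn => xiMax_le τ hτ hn
  have hσmono : ∀ u v : ℤ, 0 ≤ u → u ≤ v → σ u ≤ σ v := fun u v hu huv => xiMax_mono τ hu huv
  have sthr : ∀ C : ℤ, ∃ K : ℤ, 0 ≤ K ∧ ∀ k : ℤ, K ≤ k → C ≤ σ k := by
    intro C
    obtain ⟨K, hK⟩ := tthr C
    refine ⟨max K 0, le_max_right _ _, fun k hk => ?_⟩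
    exact le_trans (hK k (le_trans (le_max_left _ _) hk)) (hσ1 k (le_trans (le_max_right _ _) hk))
  -- window estimate at σ
  have W : ∀ A : ℝ, 0 < A → A < a →
      ∃ K : ℤ, M3 ≤ K ∧ ∀ k : ℤ, K ≤ k → A ≤ ∑ i ∈ Finset.Ico (σ k) k, p i := by
    intro A hA0 hAa
    have hex : ∃ b : ℝ, A ≤ b ∧
        ∀ᶠ n in Filter.atTop, b ≤ ∑ i ∈ Finset.Ico (τ n) n, p i := by
      by_contra hc
      push_neg at hc
      have hub : ∀ b ∈ {b : ℝ | ∀ᶠ n in Filter.atTop,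
          b ≤ ∑ i ∈ Finset.Ico (τ n) n, p i}, b ≤ A := by
        intro b hb
        by_contra hbA
        push_neg at hbA
        exact (hc b hbA.le) (Filter.Eventually.mono hb (fun n hn => not_lt.2 hn))
      have : a ≤ A := by
        rw [ha, Filter.liminf_eq]
        exact Real.sSup_le hub hA0.le
      linarith
    obtain ⟨b, hAb, hev⟩ := hex
    obtain ⟨Nb, hNb⟩ := Filter.eventually_atTop.mp hev
    obtain ⟨Ks, hKs0, hKsσ⟩ := sthr (max Nb 1)
    refine ⟨max Ks M3, le_max_right _ _, fun k hk => ?_⟩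
    have hk0 : (0:ℤ) ≤ k := by omega
    obtain ⟨s, hs0, hsk, hse⟩ := xiMax_attained τ hk0
    have hτs : τ s ≤ s - 1 := hτ s hs0
    have hσk : max Nb 1 ≤ σ k := hKsσ k (by omega)
    have hsNb : Nb ≤ s := by rw [hσdef] at hσk; rw [hse] at hσk; omega
    have hsum : b ≤ ∑ i ∈ Finset.Ico (τ s) s, p i := hNb s hsNb
    have hsplit : (∑ i ∈ Finset.Ico (τ s) s, p i) + (∑ i ∈ Finset.Ico s k, p i)
        = ∑ i ∈ Finset.Ico (τ s) k, p i := sumIcoSplit _ (by omega) hsk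
    have hpos : 0 ≤ ∑ i ∈ Finset.Ico s k, p i := by
      apply Finset.sum_nonneg
      intro i hi
      rw [Finset.mem_Ico] at hi
      exact hp i (by omega)
    have : σ k = τ s := by rw [hσdef, hse]
    rw [this]
    linarith
  -- KEY improvement step
  have key : ∀ (A D : ℝ) (K : ℤ), 0 < A → A + D < 1 → 0 ≤ D → M3 ≤ K →
      (∀ k : ℤ, K ≤ k → A ≤ ∑ i ∈ Finset.Ico (σ k) k, p i) →
      (∃ Nd : ℤ, ∀ k : ℤ, Nd ≤ k → D * x (σ k) ≤ x (k+1)) →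
      ∃ N' : ℤ, ∀ n : ℤ, N' ≤ n → (A^2/2/(1 - A - D)) * x (σ n) ≤ x (n+1) := by
    intro A D K hA0 hAD1 hD0 hKM3 hwin hDhyp
    obtain ⟨Nd, hNd⟩ := hDhyp
    obtain ⟨Ks, hKs0, hKsσ⟩ := sthr (max M2 K)
    refine ⟨max (max K Nd) (max Ks (M3+5)), fun n hn => ?_⟩
    have hnK : K ≤ n := by omega
    have hnKs : Ks ≤ n := by omega
    have hn0 : (0:ℤ) ≤ n := by omega
    have hσnM2 : max M2 K ≤ σ n := hKsσ n hnKs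
    have hxσn : 0 < x (σ n) := hxpos (σ n) (by omega)
    have hx1pos : 0 < x (n+1) := hxpos (n+1) (by omega)
    -- least m' with n+1 ≤ m' and n+1 ≤ σ m'
    have hSne : ∃ k : ℤ, n+1 ≤ k ∧ n+1 ≤ σ k := by
      obtain ⟨Kt, hKt0, hKtσ⟩ := sthr (n+1)
      exact ⟨max Kt (n+1), le_max_right _ _, hKtσ _ (le_max_left _ _)⟩
    obtain ⟨m', ⟨hm'1, hm'2⟩, hm'least⟩ :=
      Int.exists_least_of_bdd (P := fun k => n+1 ≤ k ∧ n+1 ≤ σ k)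
        ⟨n+1, fun z hz => hz.1⟩ hSne
    have hσn1 : σ (n+1) ≤ n := by have := hσub (n+1) (by omega); omega
    have hm'n2 : n+2 ≤ m' := by
      rcases eq_or_lt_of_le hm'1 with h | h
      · exfalso; rw [← h] at hm'2; omega
      · omega
    set m : ℤ := m' - 1 with hmdef
    have hmn1 : n+1 ≤ m := by omega
    have hσle : ∀ k : ℤ, n+1 ≤ k → k ≤ m → σ k ≤ n := by
      intro k h1 h2
      by_contra hcon
      push_neg at hcon
      have := hm'least k ⟨h1, by omega⟩
      omega
    -- pointwise lower bound for x (τ k), k ∈ [n+1, m]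
    have hrange : ∀ k : ℤ, n+1 ≤ k → k ≤ m →
        x (n+1) + max 0 (A - ∑ i ∈ Finset.Ico (n+1) k, p i) * x (σ n) ≤ x (τ k) := by
      intro k h1 h2
      have hk0 : (0:ℤ) ≤ k := by omega
      have hσkM2 : max M2 K ≤ σ k := hKsσ k (by omega)
      have hσkn : σ k ≤ n := hσle k h1 h2
      have htel : x (σ k) = x (n+1) + ∑ i ∈ Finset.Ico (σ k) (n+1), p i * x (τ i) :=
        telescopeX p τ x xstep (by omega) (by omega)
      have hterm : ∀ i ∈ Finset.Ico (σ k) (n+1), p i * x (σ n) ≤ p i * x (τ i) := by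
        intro i hi
        rw [Finset.mem_Ico] at hi
        have hi0 : (0:ℤ) ≤ i := by omega
        have hτiM1 : M1 ≤ τ i := hM2τ i (by omega)
        have hτiσn : τ i ≤ σ n := le_trans (hσ1 i hi0) (hσmono i n hi0 (by omega))
        exact mul_le_mul_of_nonneg_left (xmono (τ i) (σ n) hτiM1 hτiσn) (hp i hi0)
      have hsum1 : (∑ i ∈ Finset.Ico (σ k) (n+1), p i) * x (σ n)
          ≤ ∑ i ∈ Finset.Ico (σ k) (n+1), p i * x (τ i) := by
        rw [Finset.sum_mul]
        exact Finset.sum_le_sum hterm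
      have hwk : A ≤ ∑ i ∈ Finset.Ico (σ k) k, p i := hwin k (by omega)
      have hsplit : (∑ i ∈ Finset.Ico (σ k) (n+1), p i) + (∑ i ∈ Finset.Ico (n+1) k, p i)
          = ∑ i ∈ Finset.Ico (σ k) k, p i := sumIcoSplit _ (by omega) (by omega)
      have hmass0 : 0 ≤ ∑ i ∈ Finset.Ico (σ k) (n+1), p i := by
        apply Finset.sum_nonneg
        intro i hi
        rw [Finset.mem_Ico] at hi
        exact hp i (by omega)
      have hmax : max 0 (A - ∑ i ∈ Finset.Ico (n+1) k, p i)
          ≤ ∑ i ∈ Finset.Ico (σ k) (n+1), p i := max_le hmass0 (by linarith)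
      have hxτk : x (σ k) ≤ x (τ k) := by
        apply xmono (τ k) (σ k) (hM2τ k (by omega)) (hσ1 k hk0)
      have h5 : max 0 (A - ∑ i ∈ Finset.Ico (n+1) k, p i) * x (σ n)
          ≤ (∑ i ∈ Finset.Ico (σ k) (n+1), p i) * x (σ n) :=
        mul_le_mul_of_nonneg_right hmax (le_of_lt hxσn)
      linarith
    -- main summation
    have htel2 : x (n+1) = x (m+1) + ∑ k ∈ Finset.Ico (n+1) (m+1), p k * x (τ k) :=
      telescopeX p τ x xstep (by omega) (by omega)
    have hsum2 : (∑ k ∈ Finset.Ico (n+1) (m+1), p k) * x (n+1)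
          + (∑ k ∈ Finset.Ico (n+1) (m+1), p k * max 0 (A - ∑ i ∈ Finset.Ico (n+1) k, p i)) * x (σ n)
        ≤ ∑ k ∈ Finset.Ico (n+1) (m+1), p k * x (τ k) := by
      have hterm : ∀ k ∈ Finset.Ico (n+1) (m+1),
          p k * (x (n+1) + max 0 (A - ∑ i ∈ Finset.Ico (n+1) k, p i) * x (σ n))
            ≤ p k * x (τ k) := by
        intro k hk
        rw [Finset.mem_Ico] at hk
        exact mul_le_mul_of_nonneg_left (hrange k hk.1 (by omega)) (hp k (by omega))
      have hexp : ∑ k ∈ Finset.Ico (n+1) (m+1),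
          p k * (x (n+1) + max 0 (A - ∑ i ∈ Finset.Ico (n+1) k, p i) * x (σ n))
          = (∑ k ∈ Finset.Ico (n+1) (m+1), p k) * x (n+1)
          + (∑ k ∈ Finset.Ico (n+1) (m+1), p k * max 0 (A - ∑ i ∈ Finset.Ico (n+1) k, p i)) * x (σ n) := by
        rw [Finset.sum_mul, Finset.sum_mul, ← Finset.sum_add_distrib]
        apply Finset.sum_congr rfl
        intro k _
        ring
      have := Finset.sum_le_sum hterm
      linarith [hexp ▸ this]
    have hEA : A ≤ ∑ k ∈ Finset.Ico (n+1) (m+1), p k := by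
      have hw : A ≤ ∑ i ∈ Finset.Ico (σ (m+1)) (m+1), p i := hwin (m+1) (by omega)
      have hσm1 : n+1 ≤ σ (m+1) := by rw [hmdef]; simpa using hm'2
      have hsub : Finset.Ico (σ (m+1)) (m+1) ⊆ Finset.Ico (n+1) (m+1) :=
        Finset.Ico_subset_Ico hσm1 (le_refl _)
      have := Finset.sum_le_sum_of_subset_of_nonneg hsub
        (fun i hi _ => by rw [Finset.mem_Ico] at hi; exact hp i (by omega))
      linarith
    have hGA : A^2/2 ≤ ∑ k ∈ Finset.Ico (n+1) (m+1),
        p k * max 0 (A - ∑ i ∈ Finset.Ico (n+1) k, p i) := by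
      have hri := riemannX p A hA0.le
        (fun i hi => hp i (by omega)) (show (n+1:ℤ) ≤ m+1 by omega)
      have hmaxE : max 0 (A - ∑ i ∈ Finset.Ico (n+1) (m+1), p i) = 0 :=
        max_eq_left (by linarith)
      rw [hmaxE] at hri
      simpa using hri
    have hxm1 : D * x (n+1) ≤ x (m+1) := by
      have h1 : D * x (σ m) ≤ x (m+1) := hNd m (by omega)
      have hσmM2 : max M2 K ≤ σ m := hKsσ m (by omega)
      have h2 : x (n+1) ≤ x (σ m) := by
        apply xmono (σ m) (n+1) (by omega) (by have := hσle m (by omega) (le_refl m); omega)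
      calc D * x (n+1) ≤ D * x (σ m) := mul_le_mul_of_nonneg_left h2 hD0
        _ ≤ x (m+1) := h1
    set E := ∑ k ∈ Finset.Ico (n+1) (m+1), p k with hEdef
    have hfinal : (D + E) * x (n+1) + (A^2/2) * x (σ n) ≤ x (n+1) := by
      have h6 : (A^2/2) * x (σ n) ≤ (∑ k ∈ Finset.Ico (n+1) (m+1),
          p k * max 0 (A - ∑ i ∈ Finset.Ico (n+1) k, p i)) * x (σ n) :=
        mul_le_mul_of_nonneg_right hGA (le_of_lt hxσn)
      nlinarith [hsum2, htel2, hxm1]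
    have hED1 : D + E < 1 := by
      by_contra hcon
      push_neg at hcon
      have h7 : 0 < (A^2/2) * x (σ n) := mul_pos (by positivity) hxσn
      nlinarith [mul_nonneg (sub_nonneg.2 hcon) hx1pos.le]
    have h1AD : 0 < 1 - A - D := by linarith
    rw [div_mul_eq_mul_div, div_le_iff₀ h1AD]
    nlinarith [hfinal, hx1pos]
  -- bound on a
  have haub : a ≤ (0.37 : ℝ) := by
    have h1 : (2.7182818283 : ℝ) < Real.exp 1 := Real.exp_one_gt_d9
    have h2 : 1 / Real.exp 1 ≤ 0.37 := by
      rw [div_le_iff₀ (by positivity)]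
      nlinarith
    linarith
  -- choose A close to a
  set c : ℝ → ℝ := fun y => (1 - y - Real.sqrt (1 - 2*y - y^2))/2 with hcdef
  set L := Filter.limsup (fun n : ℤ =>
      ∑ j ∈ Finset.Icc (σ n) n, p j * ∏ i ∈ Finset.Ico (τ j) (σ n), (1 - p i)⁻¹)
    Filter.atTop with hLdef
  have hca : c a = (1 - a - Real.sqrt (1 - 2*a - a^2))/2 := by simp only [hcdef]
  have hLgt : 1 - c a < L := by
    rw [hca]
    exact hcond
  set δ := L - (1 - c a) with hδdef
  have hδ0 : 0 < δ := by rw [hδdef]; linarith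
  have hccont : Continuous c := by
    rw [hcdef]
    apply Continuous.div_const
    apply Continuous.sub
    · exact continuous_const.sub continuous_id
    · exact Real.continuous_sqrt.comp
        ((continuous_const.sub (continuous_const.mul continuous_id)).sub (continuous_pow 2))
  have htendc : Filter.Tendsto c (nhdsWithin a (Set.Iio a)) (nhds (c a)) :=
    (hccont.tendsto a).mono_left nhdsWithin_le_nhds
  have hev1 : ∀ᶠ A in nhdsWithin a (Set.Iio a), c a - δ/2 < c A :=
    htendc.eventually (eventually_gt_nhds (by linarith))
  have hev2 : ∀ᶠ A in nhdsWithin a (Set.Iio a), 0 < A :=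
    Filter.Eventually.filter_mono nhdsWithin_le_nhds (eventually_gt_nhds ha0)
  have hev3 : ∀ᶠ A in nhdsWithin a (Set.Iio a), A < a := by
    filter_upwards [eventually_mem_nhdsWithin] with A hA
    exact hA
  have hnebot : Filter.NeBot (nhdsWithin a (Set.Iio a)) := nhdsWithin_Iio_neBot (le_refl a)
  obtain ⟨A, hcAgt, hA0, hAa⟩ := (hev1.and (hev2.and hev3)).exists
  -- constants for A
  have hΔpos : (0:ℝ) < 1 - 2*A - A^2 := by
    nlinarith [mul_nonneg (sub_nonneg.2 (show A ≤ 0.37 by linarith)) hA0.le]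
  have hs2 : Real.sqrt (1 - 2*A - A^2) ^ 2 = 1 - 2*A - A^2 := Real.sq_sqrt hΔpos.le
  have hspos : 0 < Real.sqrt (1 - 2*A - A^2) := Real.sqrt_pos.2 hΔpos
  have hslt : Real.sqrt (1 - 2*A - A^2) < 1 - A := by
    apply (Real.sqrt_lt' (by linarith)).2
    nlinarith [mul_pos hA0 hA0]
  set cA := c A with hcAdef
  have hcAval : cA = (1 - A - Real.sqrt (1 - 2*A - A^2))/2 := by
    simp only [hcAdef, hcdef]
  have hcApos : 0 < cA := by rw [hcAval]; linarith
  have hcAlt : 2 * cA < 1 - A := by rw [hcAval]; linarith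
  have hfix : cA * (1 - A - cA) = A^2/2 := by
    rw [hcAval]
    linear_combination (-1/4 : ℝ) * hs2
  set q := cA / (1 - A - cA) with hqdef
  have hq0 : 0 ≤ q := by
    apply div_nonneg hcApos.le
    linarith
  have hq1 : q < 1 := by
    rw [hqdef, div_lt_one (by linarith)]
    linarith
  -- the iteration
  obtain ⟨K, hKM3, hwin⟩ := W A hA0 hAa
  set d : ℕ → ℝ := fun j => Nat.rec (motive := fun _ => ℝ) 0
    (fun _ D => A^2/2/(1 - A - D)) j with hddef
  have hd0 : d 0 = 0 := rfl
  have hdsucc : ∀ j : ℕ, d (j+1) = A^2/2/(1 - A - d j) := fun j => rfl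
  have hM30 : (0:ℤ) ≤ M3 := by omega
  have hiter : ∀ j : ℕ, (0 ≤ d j ∧ d j ≤ cA) ∧ (cA - cA * q^j ≤ d j) ∧
      ∃ N' : ℤ, ∀ n : ℤ, N' ≤ n → d j * x (σ n) ≤ x (n+1) := by
    intro j
    induction j with
    | zero =>
      refine ⟨⟨hd0.ge, hd0.le.trans hcApos.le⟩,
        by rw [hd0, pow_zero, mul_one, sub_self], ⟨M0, fun n hn => ?_⟩⟩
      rw [hd0, zero_mul]
      exact (hxpos (n+1) (by omega)).le
    | succ j ih =>
      obtain ⟨⟨hdj0, hdjcA⟩, hrate, ⟨N', hN'⟩⟩ := ih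
      have hden : 0 < 1 - A - d j := by linarith
      have hAD1 : A + d j < 1 := by linarith
      obtain ⟨N2, hN2⟩ := key A (d j) K hA0 hAD1 hdj0 hKM3 hwin ⟨N', hN'⟩
      have hφle : A^2/2/(1 - A - d j) ≤ cA := by
        have h2 : A^2/2/(1 - A - d j) ≤ A^2/2/(1 - A - cA) :=
          div_le_div_of_nonneg_left (by positivity) (by linarith) (by linarith)
        have h3 : A^2/2/(1 - A - cA) = cA := by
          rw [div_eq_iff (by linarith : (1:ℝ) - A - cA ≠ 0)]
          linarith [hfix]
        linarith
      refine ⟨⟨by rw [hdsucc]; positivity, by rw [hdsucc]; exact hφle⟩, ?_,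
        ⟨N2, fun n hn => by rw [hdsucc]; exact hN2 n hn⟩⟩
      -- rate estimate
      rw [hdsucc]
      have ht0 : 0 ≤ cA * q^j := by positivity
      have hpow1 : q^j ≤ 1 := pow_le_one₀ hq0 hq1.le
      have htcA : cA * q^j ≤ cA := by nlinarith
      have hm1 : A^2/2/(1 - A - (cA - cA * q^j)) ≤ A^2/2/(1 - A - d j) :=
        div_le_div_of_nonneg_left (by positivity) hden (by linarith)
      have hm2 : cA - q * (cA * q^j) ≤ A^2/2/(1 - A - (cA - cA * q^j)) := by
        rw [le_div_iff₀ (by linarith : (0:ℝ) < 1 - A - (cA - cA * q^j))]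
        have hq' : q * (1 - A - cA) = cA := by
          rw [hqdef, div_mul_cancel₀]
          exact (show (0:ℝ) < 1 - A - cA by linarith).ne'
        nlinarith [mul_nonneg (mul_nonneg hq0 ht0) ht0, hfix, hq', ht0]
      have : cA - cA * q^(j+1) = cA - q * (cA * q^j) := by ring
      linarith
  -- choose j with cA * q^j < δ/2
  have hjex : ∃ j : ℕ, cA * q^j < δ/2 := by
    have htend : Filter.Tendsto (fun j : ℕ => q ^ j) Filter.atTop (nhds 0) :=
      tendsto_pow_atTop_nhds_zero_of_lt_one hq0 hq1
    have := (htend.eventually (gt_mem_nhds (show (0:ℝ) < δ/2/cA by positivity))).exists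
    obtain ⟨j, hj⟩ := this
    refine ⟨j, ?_⟩
    rw [lt_div_iff₀ hcApos] at hj
    linarith
  obtain ⟨j, hjlt⟩ := hjex
  obtain ⟨⟨hdj0, hdjcA⟩, hrate, ⟨N', hN'⟩⟩ := hiter j
  have hdjbig : c a - δ < d j := by
    have h1 : cA - δ/2 ≤ d j := by nlinarith [hrate]
    have h2 : c a - δ/2 < cA := hcAgt
    linarith
  -- eventual bound on the limsup function
  obtain ⟨Ks2, hKs20, hKs2σ⟩ := sthr M3
  set NF : ℤ := max (max N' Ks2) (M3+5) with hNFdef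
  have hFb : ∀ n : ℤ, NF ≤ n →
      (∑ jj ∈ Finset.Icc (σ n) n, p jj * ∏ i ∈ Finset.Ico (τ jj) (σ n), (1 - p i)⁻¹) ≤ 1 - d j ∧
      0 ≤ ∑ jj ∈ Finset.Icc (σ n) n, p jj * ∏ i ∈ Finset.Ico (τ jj) (σ n), (1 - p i)⁻¹ := by
    intro n hn
    have hn0 : (0:ℤ) ≤ n := by omega
    have hσnM3 : M3 ≤ σ n := hKs2σ n (by omega)
    have hσn0 : (0:ℤ) ≤ σ n := by omega
    have hσnn : σ n ≤ n - 1 := hσub n hn0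
    have hxσn : 0 < x (σ n) := hxpos (σ n) (by omega)
    have hxn1 : 0 < x (n+1) := hxpos (n+1) (by omega)
    have hIccIco : Finset.Icc (σ n) n = Finset.Ico (σ n) (n+1) := by
      ext k; simp [Finset.mem_Icc, Finset.mem_Ico]
    have htel : x (σ n) = x (n+1) + ∑ jj ∈ Finset.Ico (σ n) (n+1), p jj * x (τ jj) :=
      telescopeX p τ x xstep (by omega) (by omega)
    have hterm : ∀ jj ∈ Finset.Ico (σ n) (n+1),
        p jj * ((∏ i ∈ Finset.Ico (τ jj) (σ n), (1 - p i)⁻¹) * x (σ n)) ≤ p jj * x (τ jj) := by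
      intro jj hjj
      rw [Finset.mem_Ico] at hjj
      have hjj0 : (0:ℤ) ≤ jj := by omega
      apply mul_le_mul_of_nonneg_left ?_ (hp jj hjj0)
      have hτjjM2 : M2 ≤ τ jj := hM3τ jj (by omega)
      have hτjjσn : τ jj ≤ σ n := le_trans (hσ1 jj hjj0) (hσmono jj n hjj0 (by omega))
      have hdec : x (σ n) ≤ x (τ jj) * ∏ i ∈ Finset.Ico (τ jj) (σ n), (1 - p i) :=
        decayX p τ x xstep hp hp1 hτ M1 M2 hM10 (by omega) xmono hM2τ hτjjM2 hτjjσn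
      have hprodpos : 0 < ∏ i ∈ Finset.Ico (τ jj) (σ n), (1 - p i) := by
        apply Finset.prod_pos
        intro i hi
        rw [Finset.mem_Ico] at hi
        have : p i < 1 := hp1 i (by omega)
        linarith
      rw [Finset.prod_inv_distrib, inv_mul_le_iff₀ hprodpos]
      exact hdec.trans_eq (mul_comm _ _)
    have hsum1 := Finset.sum_le_sum hterm
    have hexp : ∑ jj ∈ Finset.Ico (σ n) (n+1),
        p jj * ((∏ i ∈ Finset.Ico (τ jj) (σ n), (1 - p i)⁻¹) * x (σ n))
        = (∑ jj ∈ Finset.Ico (σ n) (n+1),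
            p jj * ∏ i ∈ Finset.Ico (τ jj) (σ n), (1 - p i)⁻¹) * x (σ n) := by
      rw [Finset.sum_mul]
      apply Finset.sum_congr rfl
      intro k _
      ring
    rw [hexp] at hsum1
    have hnn : 0 ≤ ∑ jj ∈ Finset.Icc (σ n) n,
        p jj * ∏ i ∈ Finset.Ico (τ jj) (σ n), (1 - p i)⁻¹ := by
      apply Finset.sum_nonneg
      intro jj hjj
      rw [Finset.mem_Icc] at hjj
      have hjj0 : (0:ℤ) ≤ jj := by omega
      apply mul_nonneg (hp jj hjj0)
      apply Finset.prod_nonneg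
      intro i hi
      rw [Finset.mem_Ico] at hi
      have hτjjM2 : M2 ≤ τ jj := hM3τ jj (by omega)
      have : p i < 1 := hp1 i (by omega)
      exact inv_nonneg.2 (by linarith)
    refine ⟨?_, hnn⟩
    have hd := hN' n (by omega)
    rw [hIccIco]
    have h7 : (∑ jj ∈ Finset.Ico (σ n) (n+1),
        p jj * ∏ i ∈ Finset.Ico (τ jj) (σ n), (1 - p i)⁻¹) * x (σ n)
        ≤ (1 - d j) * x (σ n) := by
      have h8 : ∑ jj ∈ Finset.Ico (σ n) (n+1), p jj * x (τ jj) = x (σ n) - x (n+1) := by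
        linarith [htel]
      nlinarith [hsum1]
    exact le_of_mul_le_mul_right h7 hxσn
  -- limsup estimate and contradiction
  have hLle : L ≤ 1 - d j := by
    rw [hLdef, Filter.limsup_eq]
    apply csInf_le
    · refine ⟨0, fun b hb => ?_⟩
      simp only [Set.mem_setOf_eq] at hb
      have h2 : ∀ᶠ n : ℤ in Filter.atTop,
          0 ≤ ∑ jj ∈ Finset.Icc (σ n) n, p jj * ∏ i ∈ Finset.Ico (τ jj) (σ n), (1 - p i)⁻¹ :=
        Filter.eventually_atTop.2 ⟨NF, fun n hn => (hFb n hn).2⟩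
      obtain ⟨n, hn1, hn2⟩ := (hb.and h2).exists
      exact le_trans hn2 hn1
    · simp only [Set.mem_setOf_eq]
      exact Filter.eventually_atTop.2 ⟨NF, fun n hn => (hFb n hn).1⟩
  have hcontr : L < L := by
    calc L ≤ 1 - d j := hLle
      _ < 1 - (c a - δ) := by linarith
      _ ≤ L := by rw [hδdef]; linarith
  exact lt_irrefl _ hcontr

/-- Theorem 2.2: if `τ(n) → ∞`, `p(n) < 1` for all `n ≥ 0`,
`a = liminf_{n→∞} ∑_{i=τ(n)}^{n-1} p(i)` satisfies `0 < a ≤ 1/e`, and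
`limsup_{n→∞} ∑_{j=ξ(n)}^{n} p(j) ∏_{i=τ(j)}^{ξ(n)-1} (1 - p(i))⁻¹ >
1 - (1 - a - √(1 - 2a - a²))/2`, then every solution of `Δx(n) + p(n) x(τ(n)) = 0`
oscillates. -/
theorem stmt_14 (p : ℤ → ℝ) (τ : ℤ → ℤ)
    (hp : ∀ n : ℤ, 0 ≤ n → 0 ≤ p n)
    (hp1 : ∀ n : ℤ, 0 ≤ n → p n < 1)
    (hτ : ∀ n : ℤ, 0 ≤ n → τ n ≤ n - 1)
    (hτlim : Filter.Tendsto τ Filter.atTop Filter.atTop)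
    (a : ℝ)
    (ha : a = Filter.liminf (fun n : ℤ => ∑ i ∈ Finset.Ico (τ n) n, p i) Filter.atTop)
    (ha0 : 0 < a) (ha1 : a ≤ 1 / Real.exp 1)
    (hcond : 1 - (1 - a - Real.sqrt (1 - 2 * a - a ^ 2)) / 2 <
      Filter.limsup (fun n : ℤ =>
        ∑ j ∈ Finset.Icc (xiMax τ n) n, p j * ∏ i ∈ Finset.Ico (τ j) (xiMax τ n), (1 - p i)⁻¹)
      Filter.atTop)
    (x : ℤ → ℝ)
    (hxeq : ∀ n : ℤ, 0 ≤ n → x (n + 1) - x n + p n * x (τ n) = 0) :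
    (¬ ∃ N : ℤ, ∀ n ≥ N, 0 < x n) ∧ (¬ ∃ N : ℤ, ∀ n ≥ N, x n < 0) := by
  constructor
  · rintro ⟨N, hN⟩
    exact main_pos p τ hp hp1 hτ hτlim a ha ha0 ha1 hcond x hxeq N hN
  · rintro ⟨N, hN⟩
    refine main_pos p τ hp hp1 hτ hτlim a ha ha0 ha1 hcond (fun n => - x n)
      (fun n hn => by have := hxeq n hn; ring_nf; ring_nf at this; linarith) N
      (fun n hn => by simpa using hN n hn)
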